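/- For all $\alpha, \beta \in L$ one has $(-1)^{\langle\alpha,\alpha\rangle\langle\beta,\beta\rangle + \langle\alpha,\beta\rangle} = C(\alpha,\beta)\cdot\prod_{0<j<k/2}(-\eta^{j})^{\langle\nu^{k-j}\alpha,\beta\rangle - \langle\nu^{k-j}\beta,\alpha\rangle}$, where the product runs over integers $j$ with $0 < j < k/2$ (and $\nu^{k-j} = \nu^{-j}$). -/

import Mathlib

private lemma zpow_sum_eq_prod {ι : Type*} {a : ℂ} (ha : a ≠ 0) (s : Finset ι) (f : ι → ℤ) :
    a ^ (∑ j ∈ s, f j) = ∏ j ∈ s, a ^ f j := by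
  classical
  induction s using Finset.induction_on with
  | empty => simp
  | insert _ _ h ih => rw [Finset.sum_insert h, Finset.prod_insert h, zpow_add₀ ha, ih]

theorem stmt_16 (L : Type*) [AddCommGroup L] [Module ℤ L]
    [Module.Free ℤ L] [Module.Finite ℤ L]
    (B : L →ₗ[ℤ] L →ₗ[ℤ] ℤ) (hsymm : ∀ a b : L, B a b = B b a)
    (k : ℕ) (hk : 0 < k)
    (ν : L ≃ₗ[ℤ] L) (hiso : ∀ a b : L, B (ν a) (ν b) = B a b)
    (hper : ν ^ k = 1)
    (η : ℂ) (hη : IsPrimitiveRoot η k)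
    (C : L → L → ℂ)
    (hC : ∀ a b : L, C a b =
      (-1 : ℂ) ^ (B a a * B b b + ∑ j ∈ Finset.range k, B ((ν ^ j) a) b) *
        η ^ (∑ j ∈ Finset.range k, (j : ℤ) * B ((ν ^ j) a) b))
    (α β : L) :
    (-1 : ℂ) ^ (B α α * B β β + B α β) =
      C α β *
        ∏ j ∈ (Finset.range k).filter (fun j => 0 < j ∧ 2 * j < k),
          (-(η ^ j)) ^ (B ((ν ^ (k - j)) α) β - B ((ν ^ (k - j)) β) α) := by
  classical
  have hne1 : (-1 : ℂ) ≠ 0 := by norm_num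
  have hη0 : η ≠ 0 := hη.ne_zero hk.ne'
  have hηk : η ^ k = 1 := hη.pow_eq_one
  set m : ℕ → ℤ := fun j => B ((ν ^ j) α) β with hm
  have hmm : ∀ j, B ((ν ^ j) α) β = m j := fun j => rfl
  set Lo := (Finset.range k).filter (fun j => 0 < j ∧ 2 * j < k) with hLo
  set Mi := (Finset.range k).filter (fun j => 2 * j = k) with hMi
  set Hi := (Finset.range k).filter (fun j => k < 2 * j) with hHi
  have hpow : ∀ (n : ℕ) (a b : L), B ((ν ^ n) a) ((ν ^ n) b) = B a b := by
    intro n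
    induction n with
    | zero => intro a b; simp
    | succ n ih =>
      intro a b
      have h1 : ∀ c : L, (ν ^ (n + 1)) c = (ν ^ n) (ν c) := by
        intro c; rw [pow_succ]; rfl
      rw [h1, h1, ih, hiso]
  have hswap : ∀ j, j ≤ k → B ((ν ^ (k - j)) β) α = m j := by
    intro j hj
    have h2 : (ν ^ j) ((ν ^ (k - j)) β) = β := by
      have h3 : ν ^ j * ν ^ (k - j) = 1 := by
        rw [← pow_add, Nat.add_sub_cancel' hj, hper]
      have h4 : (ν ^ j * ν ^ (k - j)) β = β := by rw [h3]; rfl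
      exact h4
    calc B ((ν ^ (k - j)) β) α = B ((ν ^ j) ((ν ^ (k - j)) β)) ((ν ^ j) α) :=
          (hpow j _ _).symm
      _ = B β ((ν ^ j) α) := by rw [h2]
      _ = m j := hsymm _ _
  have hre : ∀ g : ℕ → ℤ, ∑ j ∈ Lo, g (k - j) = ∑ j ∈ Hi, g j := by
    intro g
    refine Finset.sum_nbij' (fun j => k - j) (fun j => k - j) ?_ ?_ ?_ ?_ ?_
    · intro a ha; simp only [hLo, hHi, Finset.mem_filter, Finset.mem_range] at *; omega
    · intro a ha; simp only [hLo, hHi, Finset.mem_filter, Finset.mem_range] at *; omega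
    · intro a ha; simp only [hLo, Finset.mem_filter, Finset.mem_range] at ha
      show k - (k - a) = a; omega
    · intro a ha; simp only [hHi, Finset.mem_filter, Finset.mem_range] at ha
      show k - (k - a) = a; omega
    · intro a ha; rfl
  have hdec : ∀ g : ℕ → ℤ,
      ∑ j ∈ Finset.range k, g j = g 0 + ((∑ j ∈ Lo, g j) + ((∑ j ∈ Mi, g j) + ∑ j ∈ Hi, g j)) := by
    intro g
    have hset : Finset.range k = insert 0 (Lo ∪ (Mi ∪ Hi)) := by
      ext j
      simp only [hLo, hMi, hHi, Finset.mem_insert, Finset.mem_union, Finset.mem_filter,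
        Finset.mem_range]
      omega
    have h0 : 0 ∉ Lo ∪ (Mi ∪ Hi) := by
      simp only [hLo, hMi, hHi, Finset.mem_union, Finset.mem_filter, Finset.mem_range]
      omega
    have d2 : Disjoint Mi Hi := by
      rw [Finset.disjoint_left]
      intro a ha hb
      simp only [hMi, hHi, Finset.mem_filter, Finset.mem_range] at ha hb; omega
    have d1 : Disjoint Lo (Mi ∪ Hi) := by
      rw [Finset.disjoint_left]
      intro a ha hb
      simp only [hLo, hMi, hHi, Finset.mem_union, Finset.mem_filter, Finset.mem_range] at ha hb
      omega
    rw [hset, Finset.sum_insert h0, Finset.sum_union d1, Finset.sum_union d2]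
  have hMval : ∀ j ∈ Mi, (η : ℂ) ^ j = -1 := by
    intro j hj
    simp only [hMi, Finset.mem_filter, Finset.mem_range] at hj
    have h1 : η ^ j * η ^ j = 1 := by
      rw [← pow_add]
      have : j + j = k := by omega
      rw [this, hηk]
    rcases mul_self_eq_one_iff.mp h1 with h | h
    · exact absurd h (hη.pow_ne_one_of_pos_of_lt (by omega) (by omega))
    · exact h
  have hLk : ∀ j ∈ Lo, j ≤ k := by
    intro j hj; simp only [hLo, Finset.mem_filter, Finset.mem_range] at hj; omega
  have hprod : (∏ j ∈ Lo, (-(η ^ j)) ^ (B ((ν ^ (k - j)) α) β - B ((ν ^ (k - j)) β) α))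
      = (-1:ℂ) ^ (∑ j ∈ Lo, (m (k - j) - m j)) *
        η ^ (∑ j ∈ Lo, ((j : ℤ) * (m (k - j) - m j))) := by
    rw [zpow_sum_eq_prod hne1, zpow_sum_eq_prod hη0, ← Finset.prod_mul_distrib]
    refine Finset.prod_congr rfl fun j hj => ?_
    rw [hswap j (hLk j hj), hmm]
    rw [neg_eq_neg_one_mul, mul_zpow, ← zpow_natCast η j, ← zpow_mul]
  rw [hC, hprod]
  simp only [hmm]
  have hm0 : B α β = m 0 := by simp [hm]
  rw [hm0]
  have hEM : η ^ (∑ j ∈ Mi, (j : ℤ) * m j) = (-1:ℂ) ^ (∑ j ∈ Mi, m j) := by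
    rw [zpow_sum_eq_prod hη0, zpow_sum_eq_prod hne1]
    refine Finset.prod_congr rfl fun j hj => ?_
    rw [zpow_mul, zpow_natCast, hMval j hj]
  have e1 : ∑ j ∈ Lo, (m (k - j) - m j) = (∑ j ∈ Hi, m j) - ∑ j ∈ Lo, m j := by
    rw [Finset.sum_sub_distrib, hre m]
  have e2 : ∑ j ∈ Lo, (j:ℤ) * (m (k - j) - m j)
      = ((k:ℤ) * ∑ j ∈ Hi, m j - ∑ j ∈ Hi, (j:ℤ) * m j) - ∑ j ∈ Lo, (j:ℤ) * m j := by
    have step1 : ∑ j ∈ Lo, (j:ℤ) * (m (k - j) - m j)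
        = (∑ j ∈ Lo, (j:ℤ) * m (k - j)) - ∑ j ∈ Lo, (j:ℤ) * m j := by
      simp only [mul_sub]; rw [Finset.sum_sub_distrib]
    have step2 : ∑ j ∈ Lo, (j:ℤ) * m (k - j) = ∑ j ∈ Hi, ((k:ℤ) - (j:ℤ)) * m j := by
      rw [← hre (fun t => ((k:ℤ) - (t:ℤ)) * m t)]
      refine Finset.sum_congr rfl fun j hj => ?_
      have hjk := hLk j hj
      show (j:ℤ) * m (k - j) = ((k:ℤ) - ((k - j : ℕ):ℤ)) * m (k - j)
      have hc : ((k - j : ℕ) : ℤ) = (k:ℤ) - (j:ℤ) := by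
        push_cast [hjk]; ring
      rw [hc]; ring
    have step3 : ∑ j ∈ Hi, ((k:ℤ) - (j:ℤ)) * m j
        = (k:ℤ) * (∑ j ∈ Hi, m j) - ∑ j ∈ Hi, (j:ℤ) * m j := by
      simp only [sub_mul]; rw [Finset.sum_sub_distrib, Finset.mul_sum]
    rw [step1, step2, step3]
  have d1 := hdec m
  have d2 := hdec (fun j => (j:ℤ) * m j)
  simp only [Nat.cast_zero, zero_mul, zero_add] at d2
  rw [e1, e2, d1, d2]
  generalize (B α) α * (B β) β = c
  generalize hg1 : (∑ j ∈ Mi, m j) = SM at hEM ⊢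
  generalize hg2 : (∑ j ∈ Mi, (j:ℤ) * m j) = EM at hEM ⊢
  generalize hg3 : (∑ j ∈ Lo, m j) = SL
  generalize hg4 : (∑ j ∈ Lo, (j:ℤ) * m j) = EL
  generalize hg5 : (∑ j ∈ Hi, m j) = SH
  generalize hg6 : (∑ j ∈ Hi, (j:ℤ) * m j) = EH
  generalize m 0 = t0
  have h2 : ∀ n : ℤ, (-1:ℂ) ^ (2 * n) = 1 := by
    intro n; rw [zpow_mul]; norm_num
  have hXe : (c + (t0 + (SL + (SM + SH)))) + (SH - SL) = (c + t0) + SM + 2 * SH := by ring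
  have hYe : (EL + (EM + EH)) + (((k:ℤ) * SH - EH) - EL) = EM + (k:ℤ) * SH := by ring
  rw [mul_mul_mul_comm, ← zpow_add₀ hne1, ← zpow_add₀ hη0, hXe, hYe, zpow_add₀ hne1, zpow_add₀ hne1, h2, mul_one, zpow_add₀ hη0, hEM,
    zpow_mul, zpow_natCast, hηk, one_zpow, mul_one]
  rw [← zpow_add₀ hne1, ← zpow_add₀ hne1]
  have hh : c + t0 + SM + SM = (c + t0) + 2 * SM := by ring
  rw [hh, zpow_add₀ hne1 (c + t0) (2 * SM), h2, mul_one, zpow_add₀ hne1]
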